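/- Every functor f : A₀ ⟶ B from a discrete category factorises as a split coreflection followed by a discrete opfibration, via the coproduct of coslice categories: the functor If : A₀ ⟶ Σ_{a ∈ A₀} (f a / B) sending a to (a, 1_{f a}) is a split coreflection left adjoint with right adjoint Sf sending (a, u) to a, and the functor Tf sending (a, u : f a ⟶ b) to b is a discrete opfibration, with Tf ∘ If = f. -/

import Mathlib

open CategoryTheory

def IsDiscreteOpfibration {X B : Type*} [Category X] [Category B] (g : X ⥤ B) : Prop :=
  ∀ (x : X) (b : B) (u : g.obj x ⟶ b),
    ∃! p : Σ x' : X, x ⟶ x', ∃ h : g.obj p.1 = b, g.map p.2 = u ≫ eqToHom h.symm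
structure SplitCoreflection (A B : Type*) [Category A] [Category B] where
  f : A ⥤ B
  q : B ⥤ A
  ε : q ⋙ f ⟶ 𝟭 B
  qf : f ⋙ q = 𝟭 A
  q_ε : ∀ x : B, q.map (ε.app x) = eqToHom (Functor.congr_obj qf (q.obj x))
  ε_f : ∀ a : A, ε.app (f.obj a) = eqToHom (congrArg f.obj (Functor.congr_obj qf a))

namespace Stmt15Aux

variable {I : Type} {B : Type} [SmallCategory B] (f : Discrete I ⥤ B)

def If : Discrete I ⥤ Σ a : I, Under (f.obj ⟨a⟩) :=
  Discrete.functor (fun a => ⟨a, Under.mk (𝟙 (f.obj ⟨a⟩))⟩)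

def Qf : (Σ a : I, Under (f.obj ⟨a⟩)) ⥤ Discrete I :=
  Sigma.desc (fun a => (Functor.const _).obj ⟨a⟩)

def Tf : (Σ a : I, Under (f.obj ⟨a⟩)) ⥤ B :=
  Sigma.desc (fun a => Under.forget _)

def mkh {i : I} {x y : Under (f.obj ⟨i⟩)} (g : x ⟶ y) :
    (⟨i, x⟩ : Σ a : I, Under (f.obj ⟨a⟩)) ⟶ ⟨i, y⟩ :=
  Sigma.SigmaHom.mk g

def eps : Qf f ⋙ If f ⟶ 𝟭 (Σ a : I, Under (f.obj ⟨a⟩)) where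
  app X := Sigma.SigmaHom.mk (Under.homMk X.2.hom (by exact Category.id_comp _))
  naturality := by
    rintro ⟨i, u⟩ ⟨j, v⟩ kk
    cases kk using Sigma.SigmaHom.casesOn with
    | mk k =>
      rename_i v
      have h : (Under.homMk u.hom (by simp) : Under.mk (𝟙 (f.obj ⟨i⟩)) ⟶ u) ≫ k =
          𝟙 (Under.mk (𝟙 (f.obj ⟨i⟩))) ≫ Under.homMk v.hom (by simp) := by ext; simp
      exact (congrArg (fun t => mkh f t) h.symm : _)

def qf_eq : If f ⋙ Qf f = 𝟭 (Discrete I) :=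
  CategoryTheory.Functor.ext (fun _ => rfl) (fun _ _ _ => Subsingleton.elim _ _)

def S : SplitCoreflection (Discrete I) (Σ a : I, Under (f.obj ⟨a⟩)) where
  f := If f
  q := Qf f
  ε := eps f
  qf := qf_eq f
  q_ε := fun x => Subsingleton.elim _ _
  ε_f := by
    rintro ⟨a⟩
    have h2 : (eqToHom (congrArg (If f).obj (Functor.congr_obj (qf_eq f) ⟨a⟩))) =
        𝟙 ((If f).obj ⟨a⟩) := eqToHom_refl _ _
    rw [h2]
    have h3 : (Under.homMk (𝟙 (f.obj ⟨a⟩)) (by simp) :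
        Under.mk (𝟙 (f.obj ⟨a⟩)) ⟶ Under.mk (𝟙 (f.obj ⟨a⟩))) = 𝟙 _ := by ext; simp
    exact (congrArg (fun t => mkh f t) h3 : _)

theorem tf_opfib : IsDiscreteOpfibration (Tf f) := by
  rintro ⟨a, u⟩ b v
  refine ⟨⟨⟨a, Under.mk (u.hom ≫ v)⟩, Sigma.SigmaHom.mk (Under.homMk v)⟩,
    ⟨rfl, by show v = v ≫ _; exact (Category.comp_id v).symm⟩, ?_⟩
  rintro ⟨⟨a', w⟩, k⟩ ⟨h, hm⟩
  cases k using Sigma.SigmaHom.casesOn with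
  | mk m =>
    rename_i w
    obtain ⟨⟨⟨⟩⟩, r, wh⟩ := w
    have h' : r = b := h
    subst h'
    have hm' : m.right = v := by exact hm.trans (Category.comp_id v)
    have hw : u.hom ≫ v = wh := by rw [← hm']; exact Under.w m
    subst hw
    have hmm : m = Under.homMk v (by rfl) := by ext; exact hm'
    rw [hmm]
    rfl

theorem factor : If f ⋙ Tf f = f := by
  refine CategoryTheory.Functor.ext (fun _ => rfl) ?_
  rintro ⟨a⟩ ⟨a'⟩ g
  have h : a = a' := g.down.down
  subst h
  have hg : g = 𝟙 _ := Subsingleton.elim _ _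
  rw [hg]
  simp
  exact (Category.comp_id _).symm

end Stmt15Aux

/-- Every functor from a discrete category factorises as a split coreflection
followed by a discrete opfibration, via the coproduct of coslice categories. -/
theorem stmt15 {I : Type} {B : Type} [SmallCategory B] (f : Discrete I ⥤ B) :
    ∃ (S : SplitCoreflection (Discrete I) (Σ a : I, Under (f.obj ⟨a⟩)))
      (Tf : (Σ a : I, Under (f.obj ⟨a⟩)) ⥤ B),
      (∀ a : I, S.f.obj ⟨a⟩ = ⟨a, Under.mk (𝟙 (f.obj ⟨a⟩))⟩) ∧
      (∀ e : Σ a : I, Under (f.obj ⟨a⟩), S.q.obj e = ⟨e.1⟩) ∧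
      (∀ e : Σ a : I, Under (f.obj ⟨a⟩), Tf.obj e = e.2.right) ∧
      IsDiscreteOpfibration Tf ∧
      S.f ⋙ Tf = f :=
  ⟨Stmt15Aux.S f, Stmt15Aux.Tf f, fun _ => rfl, fun _ => rfl, fun _ => rfl,
    Stmt15Aux.tf_opfib f, Stmt15Aux.factor f⟩
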